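/- For q ≥ 2, the Baumslag–Solitar group BS(1,q) does not embed into GL(2,ℤ) × A for any abelian group A. -/

import Mathlib

/-- The Baumslag–Solitar group `BS(1,q)`, presented by generators `b = of false`,
`t = of true` and the single relation `t * b * t⁻¹ = b ^ q`. -/
def BS (q : ℕ) : Type :=
  PresentedGroup ({FreeGroup.of true * FreeGroup.of false * (FreeGroup.of true)⁻¹ *
    (FreeGroup.of false ^ q)⁻¹} : Set (FreeGroup Bool))

instance (q : ℕ) : Group (BS q) := by unfold BS; infer_instance

section Aux

open Matrix

abbrev M2 := Matrix (Fin 2) (Fin 2) ℤ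


lemma ch2 (M : M2) : M ^ 2 = M.trace • M - M.det • 1 := by
  ext i j
  simp only [pow_two, Matrix.sub_apply, Matrix.smul_apply, Matrix.mul_apply,
    Fin.sum_univ_two, smul_eq_mul, Matrix.one_apply, Matrix.trace_fin_two,
    Matrix.det_fin_two]
  fin_cases i <;> fin_cases j <;> simp <;> ring

lemma one_add_pow (N : M2) (hN2 : N * N = 0) (k : ℕ) :
    (1 + N) ^ k = 1 + (k : ℤ) • N := by
  induction k with
  | zero => simp
  | succ k ih =>
    rw [pow_succ, ih]
    push_cast
    rw [add_mul, one_mul, mul_add, mul_one, smul_mul_assoc, hN2, smul_zero, add_smul, one_smul]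
    abel

lemma conj_cancel (g gi P : M2) (hgg : g * gi = 1) (hgg' : gi * g = 1) :
    gi * (g * P * gi) * g = P := by
  rw [show gi * (g * P * gi) * g = (gi * g) * P * (gi * g) by simp only [mul_assoc],
    hgg', one_mul, mul_one]

lemma conj_smul_step (q : ℤ) (g gi P : M2) (hgg : g * gi = 1) (hgg' : gi * g = 1)
    (hP : g * P * gi = q • P) : P = q • (gi * P * g) := by
  have h1 : gi * (g * P * gi) * g = gi * (q • P) * g := by rw [hP]
  rw [conj_cancel g gi P hgg hgg', mul_smul_comm, smul_mul_assoc] at h1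
  exact h1

lemma nilcase (q : ℕ) (hq : 2 ≤ q) (C g gi : M2) (hgg : g * gi = 1) (hgg' : gi * g = 1)
    (h : g * C * gi = C ^ q) (htr : C.trace = 2) (hdet : C.det = 1) : C = 1 := by
  set N : M2 := C - 1 with hN
  have hMN : C = 1 + N := by rw [hN]; abel
  have hN2 : N * N = 0 := by
    have h2 : C ^ 2 = (2 : ℤ) • C - (1 : ℤ) • 1 := by rw [← htr, ← hdet]; exact ch2 C
    have h3 : N * N = C ^ 2 - (2 : ℤ) • C + 1 := by
      rw [hN, pow_two, sub_mul, mul_sub, mul_sub, mul_one, one_mul, one_mul, two_smul]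
      abel
    rw [h3, h2, one_smul]
    abel
  have hgN : g * N * gi = (q : ℤ) • N := by
    have h1 : g * (1 + N) * gi = 1 + (q : ℤ) • N := by
      rw [← hMN, h, hMN, one_add_pow N hN2]
    rw [mul_add, mul_one, add_mul, hgg] at h1
    exact add_left_cancel h1
  have key : ∀ k : ℕ, ∃ P : M2, N = ((q : ℤ)) ^ k • P ∧ g * P * gi = (q : ℤ) • P := by
    intro k
    induction k with
    | zero => exact ⟨N, by simp, hgN⟩
    | succ k ih =>
      obtain ⟨P, hP1, hP2⟩ := ih
      have hPP := conj_smul_step (q : ℤ) g gi P hgg hgg' hP2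
      refine ⟨gi * P * g, ?_, ?_⟩
      · rw [hP1, pow_succ]
        nth_rewrite 1 [hPP]
        rw [smul_smul]
      · rw [conj_cancel gi g P hgg' hgg]
        exact hPP
  have hN0 : N = 0 := by
    ext i j
    by_contra hne
    simp only [Matrix.zero_apply] at hne
    set k := (N i j).natAbs with hk
    obtain ⟨P, hP1, _⟩ := key k
    have hd : ((q : ℤ)) ^ k ∣ N i j := by
      rw [hP1]; exact ⟨P i j, by simp⟩
    have hle : ((q : ℤ)) ^ k ≤ |N i j| :=
      Int.le_of_dvd (abs_pos.2 hne) ((dvd_abs _ _).2 hd)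
    have h2q : (2 : ℤ) ^ k ≤ ((q : ℤ)) ^ k :=
      pow_le_pow_left₀ (by norm_num) (by exact_mod_cast hq) k
    have hlt : ((N i j).natAbs : ℤ) < 2 ^ (N i j).natAbs := by
      exact_mod_cast Nat.lt_two_pow_self
    rw [Int.abs_eq_natAbs] at hle
    rw [← hk] at hlt
    omega
  rw [hMN, hN0, add_zero]

lemma powrec (M : Matrix (Fin 2) (Fin 2) ℤ) (n : ℕ) :
    M ^ (n + 2) = M.trace • M ^ (n + 1) - M.det • M ^ n := by
  have h : M ^ (n + 2) = M ^ n * M ^ 2 := by rw [← pow_add]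
  rw [h, ch2, Matrix.mul_sub, mul_smul_comm, mul_smul_comm, Matrix.mul_one, ← pow_succ]

lemma tracerec (M : Matrix (Fin 2) (Fin 2) ℤ) (n : ℕ) :
    (M ^ (n + 2)).trace = M.trace * (M ^ (n + 1)).trace - M.det * (M ^ n).trace := by
  rw [powrec, Matrix.trace_sub, Matrix.trace_smul, Matrix.trace_smul, smul_eq_mul, smul_eq_mul]

lemma trace_pow_zero (M : Matrix (Fin 2) (Fin 2) ℤ) : (M ^ 0).trace = 2 := by
  simp [Matrix.trace_one]

-- growth: det 1, |trace| ≥ 3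
lemma growth (M : Matrix (Fin 2) (Fin 2) ℤ) (hdet : M.det = 1) (htr : 3 ≤ |M.trace|) :
    ∀ n, 3 ≤ |(M ^ (n + 1)).trace| ∧ 2 * |(M ^ (n + 1)).trace| ≤ |(M ^ (n + 2)).trace| := by
  intro n
  induction n with
  | zero =>
    constructor
    · simpa using htr
    · have h2 : (M ^ 2).trace = M.trace * M.trace - 2 := by
        have := tracerec M 0
        rw [hdet, trace_pow_zero] at this
        simpa [pow_one] using this
      have habs : |M.trace| * |M.trace| = M.trace * M.trace := abs_mul_abs_self _
      have h3 : 2 * |M.trace| ≤ M.trace * M.trace - 2 := by nlinarith [abs_nonneg M.trace]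
      have h4 : (0:ℤ) ≤ M.trace * M.trace - 2 := by nlinarith [abs_nonneg M.trace]
      rw [show (0:ℕ) + 2 = 2 by rfl, h2, abs_of_nonneg h4]
      simpa using h3
  | succ n ih =>
    obtain ⟨ih1, ih2⟩ := ih
    refine ⟨by linarith, ?_⟩
    have hrec := tracerec M (n + 1)
    rw [hdet, one_mul] at hrec
    have h5 : |M.trace * (M ^ (n + 2)).trace| - |(M ^ (n + 1)).trace|
        ≤ |(M ^ (n + 3)).trace| := by
      calc |M.trace * (M ^ (n + 2)).trace| - |(M ^ (n + 1)).trace|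
          ≤ |M.trace * (M ^ (n + 2)).trace - (M ^ (n + 1)).trace| := abs_sub_abs_le_abs_sub _ _
        _ = |(M ^ (n + 3)).trace| := by rw [← hrec]
    rw [abs_mul] at h5
    have h6 : 3 * |(M ^ (n + 2)).trace| ≤ |M.trace| * |(M ^ (n + 2)).trace| :=
      mul_le_mul_of_nonneg_right htr (abs_nonneg _)
    have h7 : |(M ^ (n + 1)).trace| ≤ |(M ^ (n + 2)).trace| := by linarith
    linarith

lemma growth_lt (M : Matrix (Fin 2) (Fin 2) ℤ) (hdet : M.det = 1) (htr : 3 ≤ |M.trace|)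
    (n : ℕ) (hn : 2 ≤ n) : |(M ^ 1).trace| < |(M ^ n).trace| := by
  induction n with
  | zero => omega
  | succ n ih =>
    rcases Nat.lt_or_ge n 2 with h | h
    · interval_cases n
      · omega
      · have h0 := growth M hdet htr 0
        norm_num at h0 ⊢
        omega
    · have hlt := ih h
      obtain ⟨n', rfl⟩ : ∃ n', n = n' + 1 := ⟨n - 1, by omega⟩
      have hg := (growth M hdet htr n').2
      have he : n' + 1 + 1 = n' + 2 := rfl
      rw [he]
      have h1 := (growth M hdet htr n').1
      omega

lemma conj_sq (C g gi X : M2) (hgg' : gi * g = 1) (h : g * C * gi = X) :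
    g * C ^ 2 * gi = X ^ 2 := by
  rw [← h, pow_two, pow_two]
  rw [show g * C * gi * (g * C * gi) = g * C * ((gi * g) * (C * gi)) by
    simp only [mul_assoc], hgg', one_mul]
  simp only [mul_assoc]

lemma trace_conj (C g gi : M2) (hgg' : gi * g = 1) : (g * C * gi).trace = C.trace := by
  rw [Matrix.trace_mul_comm, ← mul_assoc, hgg', one_mul]

lemma detOne (q : ℕ) (hq : 2 ≤ q) (C g gi : M2) (hgg : g * gi = 1) (hgg' : gi * g = 1)
    (h : g * C * gi = C ^ q) (hdet : C.det = 1) : ∃ n : ℕ, 0 < n ∧ C ^ n = 1 := by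
  have htr_q : (C ^ q).trace = C.trace := by rw [← h]; exact trace_conj C g gi hgg'
  by_cases h3 : 3 ≤ |C.trace|
  · exfalso
    have hlt := growth_lt C hdet h3 q hq
    rw [pow_one, htr_q] at hlt
    exact lt_irrefl _ hlt
  · push_neg at h3
    have hb : -2 ≤ C.trace ∧ C.trace ≤ 2 := abs_le.mp (by omega)
    have h2 : C ^ 2 = C.trace • C - (1 : ℤ) • 1 := by rw [← hdet]; exact ch2 C
    have htr2 : (C ^ 2).trace = C.trace * C.trace - 2 := by
      have := tracerec C 0
      rw [hdet, trace_pow_zero, pow_one] at this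
      simpa using this
    set t := C.trace with ht
    obtain ⟨hb1, hb2⟩ := hb
    interval_cases t
    · -- t = -2 : use C^2
      refine ⟨2, by norm_num, ?_⟩
      have hrel2 : g * C ^ 2 * gi = (C ^ 2) ^ q := by
        have h' := conj_sq C g gi _ hgg' h
        rwa [← pow_mul, mul_comm, pow_mul] at h'
      exact nilcase q hq (C ^ 2) g gi hgg hgg' hrel2
        (by rw [htr2]; norm_num) (by rw [Matrix.det_pow, hdet, one_pow])
    · -- t = -1 : C^3 = 1
      refine ⟨3, by norm_num, ?_⟩
      have : C ^ 2 = -C - 1 := by rw [h2]; simp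
      calc C ^ 3 = C ^ 2 * C := by rw [pow_succ]
        _ = (-C - 1) * C := by rw [this]
        _ = -(C ^ 2) - C := by rw [pow_two]; noncomm_ring
        _ = 1 := by rw [this]; abel
    · -- t = 0 : C^4 = 1
      refine ⟨4, by norm_num, ?_⟩
      have hC2 : C ^ 2 = -1 := by rw [h2]; simp
      calc C ^ 4 = (C ^ 2) ^ 2 := by rw [← pow_mul]
        _ = 1 := by rw [hC2]; noncomm_ring
    · -- t = 1 : C^3 = -1, C^6 = 1
      refine ⟨6, by norm_num, ?_⟩
      have hC2 : C ^ 2 = C - 1 := by rw [h2]; simp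
      have hC3 : C ^ 3 = -1 := by
        calc C ^ 3 = C ^ 2 * C := by rw [pow_succ]
          _ = (C - 1) * C := by rw [hC2]
          _ = C ^ 2 - C := by rw [pow_two]; noncomm_ring
          _ = -1 := by rw [hC2]; abel
      calc C ^ 6 = (C ^ 3) ^ 2 := by rw [← pow_mul]
        _ = 1 := by rw [hC3]; noncomm_ring
    · -- t = 2 : nilpotent case
      refine ⟨1, by norm_num, ?_⟩
      rw [pow_one]
      exact nilcase q hq C g gi hgg hgg' h (by rw [← ht]) hdet

lemma glfin (q : ℕ) (hq : 2 ≤ q) (c g : GL (Fin 2) ℤ) (h : g * c * g⁻¹ = c ^ q) :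
    ∃ n : ℕ, 0 < n ∧ c ^ n = 1 := by
  set C : M2 := (c : M2) with hC
  set G : M2 := (g : M2) with hG
  set Gi : M2 := ((g⁻¹ : GL (Fin 2) ℤ) : M2) with hGi
  have hgg : G * Gi = 1 := by
    rw [hG, hGi, ← Units.val_mul, mul_inv_cancel, Units.val_one]
  have hgg' : Gi * G = 1 := by
    rw [hG, hGi, ← Units.val_mul, inv_mul_cancel, Units.val_one]
  have hmat : G * C * Gi = C ^ q := by
    have := congrArg (Units.val) h
    simpa [Units.val_mul, hC, hG, hGi] using this
  have hcc : C * ((c⁻¹ : GL (Fin 2) ℤ) : M2) = 1 := by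
    rw [hC, ← Units.val_mul, mul_inv_cancel, Units.val_one]
  have hdetU : IsUnit C.det := by
    refine IsUnit.of_mul_eq_one ((c⁻¹ : GL (Fin 2) ℤ) : M2).det ?_
    rw [← Matrix.det_mul, hcc, Matrix.det_one]
  rcases Int.isUnit_iff.mp hdetU with hd1 | hdm1
  · obtain ⟨n, hn, hCn⟩ := detOne q hq C G Gi hgg hgg' hmat hd1
    refine ⟨n, hn, Units.ext ?_⟩
    show (↑(c ^ n) : M2) = ↑(1 : GL (Fin 2) ℤ)
    rw [Units.val_pow_eq_pow_val, Units.val_one]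
    exact hCn
  · have hrel2 : G * C ^ 2 * Gi = (C ^ 2) ^ q := by
      have h' := conj_sq C G Gi _ hgg' hmat
      rwa [← pow_mul, mul_comm, pow_mul] at h'
    have hd2 : (C ^ 2).det = 1 := by rw [Matrix.det_pow, hdm1]; norm_num
    obtain ⟨n, hn, hCn⟩ := detOne q hq (C ^ 2) G Gi hgg hgg' hrel2 hd2
    refine ⟨2 * n, by omega, Units.ext ?_⟩
    show (↑(c ^ (2 * n)) : M2) = ↑(1 : GL (Fin 2) ℤ)
    rw [Units.val_pow_eq_pow_val, Units.val_one, pow_mul]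
    exact hCn



lemma addRight_pow (n : ℕ) (x : ℚ) : ((Equiv.addRight (1 : ℚ)) ^ n) x = x + n := by
  induction n with
  | zero => simp
  | succ n ih =>
    rw [pow_succ']
    simp only [Equiv.Perm.mul_apply, Equiv.coe_addRight]
    rw [ih]
    push_cast
    ring

end Aux

/-- For `q ≥ 2`, the Baumslag–Solitar group `BS(1,q)` does not embed into
`GL(2,ℤ) × A` for any abelian group `A`. -/
theorem stmt2 (q : ℕ) (hq : 2 ≤ q) (A : Type*) [CommGroup A] :
    ¬ ∃ f : BS q →* GL (Fin 2) ℤ × A, Function.Injective f := by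
  rintro ⟨f, hf⟩
  set rels : Set (FreeGroup Bool) :=
    {FreeGroup.of true * FreeGroup.of false * (FreeGroup.of true)⁻¹ *
      (FreeGroup.of false ^ q)⁻¹} with hrels
  -- generators
  have hq0 : (q : ℚ) ≠ 0 := by positivity
  set b : BS q := PresentedGroup.of (rels := rels) false with hb
  set t : BS q := PresentedGroup.of (rels := rels) true with ht
  -- the relation holds in BS q
  have hrel : t * b * t⁻¹ = b ^ q := by
    have h1 : t * b * t⁻¹ * (b ^ q)⁻¹ = 1 := by
      have : (t * b * t⁻¹ * (b ^ q)⁻¹ : BS q) =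
          PresentedGroup.mk rels (FreeGroup.of true * FreeGroup.of false *
            (FreeGroup.of true)⁻¹ * (FreeGroup.of false ^ q)⁻¹) := by
        simp [hb, ht, PresentedGroup.of, map_mul, map_inv, map_pow]; rfl
      rw [this]
      have hmem : (FreeGroup.of true * FreeGroup.of false * (FreeGroup.of true)⁻¹ *
          (FreeGroup.of false ^ q)⁻¹) ∈ Subgroup.normalClosure rels :=
        Subgroup.subset_normalClosure (by simp [hrels])
      exact (QuotientGroup.eq_one_iff _).mpr hmem
    exact mul_inv_eq_one.mp h1
  -- push to the image
  have hrelf : f t * f b * (f t)⁻¹ = (f b) ^ q := by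
    rw [← map_mul, ← map_inv, ← map_mul, ← map_pow, hrel]
  -- second coordinate : abelian
  have hsnd : ((f b).2) ^ (q - 1) * (f b).2 = (f b).2 ^ q := by
    rw [← pow_succ]
    congr 1
    omega
  have hA : (f b).2 ^ q = (f b).2 := by
    have h2 := congrArg Prod.snd hrelf
    simp only [Prod.fst_mul, Prod.snd_mul, Prod.snd_inv, Prod.pow_snd] at h2
    rw [← h2]
    rw [mul_comm, ← mul_assoc, inv_mul_cancel, one_mul]
  have hAq : (f b).2 ^ (q - 1) = 1 := by
    have := hsnd.trans hA
    exact mul_right_cancel (by rw [this, one_mul])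
  -- first coordinate
  have hfst : (f t).1 * (f b).1 * ((f t).1)⁻¹ = (f b).1 ^ q := by
    have h1 := congrArg Prod.fst hrelf
    simpa only [Prod.fst_mul, Prod.fst_inv, Prod.pow_fst] using h1
  obtain ⟨n, hn, hfin⟩ := glfin q hq (f b).1 (f t).1 hfst
  -- so b ^ (n * (q-1)) maps to 1
  set m : ℕ := n * (q - 1) with hm
  have hm0 : 0 < m := by
    have : 0 < q - 1 := by omega
    positivity
  have hbm : f (b ^ m) = 1 := by
    rw [map_pow]
    have h1 : (f b ^ m).1 = 1 := by rw [Prod.pow_fst, hm, pow_mul, hfin, one_pow]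
    have h2 : (f b ^ m).2 = 1 := by rw [Prod.pow_snd, hm, mul_comm, pow_mul, hAq, one_pow]
    exact Prod.ext h1 h2
  have hb1 : b ^ m = 1 := by
    apply hf
    rw [hbm, map_one]
  -- now the homomorphism to Perm ℚ shows b has infinite order
  have hrelmap : ∀ r ∈ rels, FreeGroup.lift
      (fun x : Bool => cond x (Equiv.mulLeft₀ (q : ℚ) hq0) (Equiv.addRight (1 : ℚ))) r = 1 := by
    intro r hr
    rw [hrels] at hr
    simp only [Set.mem_singleton_iff] at hr
    subst hr
    simp only [map_mul, map_inv, map_pow, FreeGroup.lift_apply_of, Bool.cond_true, Bool.cond_false]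
    have E : (Equiv.mulLeft₀ (q : ℚ) hq0) * (Equiv.addRight (1 : ℚ))
        = (Equiv.addRight (1 : ℚ)) ^ q * (Equiv.mulLeft₀ (q : ℚ) hq0) := by
      ext x
      simp only [Equiv.Perm.mul_apply, Equiv.coe_addRight, Equiv.mulLeft₀_apply, addRight_pow]
      ring
    rw [show (Equiv.mulLeft₀ (q : ℚ) hq0) * (Equiv.addRight (1 : ℚ)) *
        (Equiv.mulLeft₀ (q : ℚ) hq0)⁻¹ * ((Equiv.addRight (1 : ℚ)) ^ q)⁻¹
        = ((Equiv.mulLeft₀ (q : ℚ) hq0) * (Equiv.addRight (1 : ℚ))) *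
        ((Equiv.mulLeft₀ (q : ℚ) hq0)⁻¹ * ((Equiv.addRight (1 : ℚ)) ^ q)⁻¹) by group, E]
    group
  set φ : BS q →* Equiv.Perm ℚ := PresentedGroup.toGroup hrelmap with hφ
  have hφb : φ b = Equiv.addRight (1 : ℚ) := by
    rw [hb, hφ]
    exact PresentedGroup.toGroup.of hrelmap
  have : φ (b ^ m) = 1 := by rw [hb1, map_one]
  rw [map_pow, hφb] at this
  have h0 : ((Equiv.addRight (1 : ℚ)) ^ m) 0 = (0 : ℚ) := by rw [this]; rfl
  rw [addRight_pow] at h0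
  simp at h0
  omega
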